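/- Let G be a group with finite symmetric generating set S, y a central element of G, and α : G → ℂ a harmonic function such that the function x ↦ α(x y⁻¹) - α(x) lies in ℓ^p(G) for some 1 ≤ p < ∞. Then α(x y⁻¹) = α(x) for all x ∈ G, i.e., α is invariant under right translation by y. -/

import Mathlib

open scoped BigOperators

/-- Equality case of the averaging / maximum principle: if finitely many complex
numbers of norm at most `‖u‖` have the differences to `u` summing to zero, then they
are all equal to `u`. -/
private lemma eq_of_avg_eq {ι : Type*} (s : Finset ι) (v : ι → ℂ) (u : ℂ)
    (hle : ∀ i ∈ s, ‖v i‖ ≤ ‖u‖)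
    (hsum : ∑ i ∈ s, (v i - u) = 0) : ∀ i ∈ s, v i = u := by
  have hsum' : ∑ i ∈ s, v i = (s.card : ℂ) * u := by
    rw [Finset.sum_sub_distrib, sub_eq_zero] at hsum
    simpa [mul_comm] using hsum
  have hre : ∑ i ∈ s, (v i * (starRingEnd ℂ) u).re
      = (s.card : ℝ) * Complex.normSq u := by
    have : (∑ i ∈ s, v i * (starRingEnd ℂ) u).re
        = (((s.card : ℂ) * u) * (starRingEnd ℂ) u).re := by
      rw [← Finset.sum_mul, hsum']
    simpa [Complex.mul_conj, mul_assoc, Complex.re_sum] using this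
  have key : ∑ i ∈ s, Complex.normSq (v i - u) = 0 := by
    have hexp : ∑ i ∈ s, Complex.normSq (v i - u)
        = ∑ i ∈ s, Complex.normSq (v i) - (s.card : ℝ) * Complex.normSq u := by
      simp only [Complex.normSq_sub]
      rw [Finset.sum_sub_distrib, Finset.sum_add_distrib, Finset.sum_const,
        ← Finset.mul_sum, hre, nsmul_eq_mul]
      ring
    have hle' : ∑ i ∈ s, Complex.normSq (v i) ≤ (s.card : ℝ) * Complex.normSq u := by
      calc ∑ i ∈ s, Complex.normSq (v i) ≤ ∑ i ∈ s, Complex.normSq u := by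
            refine Finset.sum_le_sum fun i hi => ?_
            have := hle i hi
            have h1 : Complex.normSq (v i) = ‖v i‖ ^ 2 := by
              rw [Complex.sq_norm]
            have h2 : Complex.normSq u = ‖u‖ ^ 2 := by
              rw [Complex.sq_norm]
            rw [h1, h2]
            exact pow_le_pow_left₀ (norm_nonneg _) this 2
        _ = (s.card : ℝ) * Complex.normSq u := by
            rw [Finset.sum_const, nsmul_eq_mul]
    have hge : 0 ≤ ∑ i ∈ s, Complex.normSq (v i - u) :=
      Finset.sum_nonneg fun i _ => Complex.normSq_nonneg _
    have : ∑ i ∈ s, Complex.normSq (v i - u) ≤ 0 := by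
      rw [hexp]; linarith
    linarith
  intro i hi
  have h0 : Complex.normSq (v i - u) = 0 :=
    (Finset.sum_eq_zero_iff_of_nonneg fun j _ => Complex.normSq_nonneg _).mp key i hi
  have := Complex.normSq_eq_zero.mp h0
  exact sub_eq_zero.mp this

theorem harmonic_translate_invariant {G : Type*} [Group G] (S : Finset G)
    (hsym : ∀ g ∈ S, g⁻¹ ∈ S) (hgen : Subgroup.closure (S : Set G) = ⊤)
    (y : G) (hy : y ∈ Subgroup.center G)
    (p : ℝ) (hp : 1 ≤ p) (α : G → ℂ)
    (hharm : ∀ x : G, ∑ g ∈ S, (α (x * g⁻¹) - α x) = 0)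
    (hlp : Summable (fun x : G => ‖α (x * y⁻¹) - α x‖ ^ p)) :
    ∀ x : G, α (x * y⁻¹) = α x := by
  set β : G → ℂ := fun x => α (x * y⁻¹) - α x with hβ
  have hpp : 0 < p := lt_of_lt_of_le one_pos hp
  -- harmonicity of β
  have hharmβ : ∀ x : G, ∑ g ∈ S, (β (x * g⁻¹) - β x) = 0 := by
    intro x
    have hcomm : ∀ g : G, x * g⁻¹ * y⁻¹ = x * y⁻¹ * g⁻¹ := by
      intro g
      have : y⁻¹ * g⁻¹ = g⁻¹ * y⁻¹ :=
        (Subgroup.mem_center_iff.mp (Subgroup.inv_mem _ hy) g⁻¹).symm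
      rw [mul_assoc, mul_assoc, this]
    have : ∑ g ∈ S, (β (x * g⁻¹) - β x)
        = ∑ g ∈ S, (α (x * y⁻¹ * g⁻¹) - α (x * y⁻¹))
          - ∑ g ∈ S, (α (x * g⁻¹) - α x) := by
      rw [← Finset.sum_sub_distrib]
      refine Finset.sum_congr rfl fun g _ => ?_
      simp only [hβ, hcomm g]
      ring
    rw [this, hharm, hharm, sub_zero]
  suffices hz : ∀ x : G, β x = 0 by
    intro x
    have := hz x
    simpa [hβ, sub_eq_zero] using this
  by_contra hcon
  push_neg at hcon
  obtain ⟨x₀, hx₀⟩ := hcon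
  -- the set of points where ‖β‖ is at least ‖β x₀‖ is finite
  have hfin : {x : G | ‖β x₀‖ ≤ ‖β x‖}.Finite := by
    have htend := hlp.tendsto_cofinite_zero
    have hpos : 0 < ‖β x₀‖ ^ p :=
      Real.rpow_pos_of_pos (norm_pos_iff.mpr hx₀) p
    have : {x : G | ‖β x₀‖ ^ p ≤ ‖β x‖ ^ p}.Finite := by
      have := htend.eventually (eventually_lt_nhds hpos)
      simpa [Filter.eventually_cofinite, not_lt] using this
    refine this.subset fun x hx => ?_
    exact Real.rpow_le_rpow (norm_nonneg _) hx (le_of_lt hpp)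
  -- maximum of ‖β‖ is attained at some m
  obtain ⟨m, hmA, hmax'⟩ := Set.exists_max_image _ (fun x => ‖β x‖) hfin ⟨x₀, by simp⟩
  have hmax : ∀ x : G, ‖β x‖ ≤ ‖β m‖ := by
    intro x
    by_cases hx : ‖β x₀‖ ≤ ‖β x‖
    · exact hmax' x hx
    · push_neg at hx
      exact le_trans (le_of_lt hx) hmA
  -- equality case: at any point where β equals β m, β is locally constant
  have hstep : ∀ x : G, β x = β m → ∀ g ∈ S, β (x * g⁻¹) = β x := by
    intro x hx g hg
    refine eq_of_avg_eq S (fun g => β (x * g⁻¹)) (β x) ?_ (hharmβ x) g hg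
    intro i _
    rw [hx]
    exact hmax _
  -- propagate along the generating set
  have hprop : ∀ z ∈ Subgroup.closure (S : Set G),
      ∀ x : G, (β x = β m ↔ β (x * z) = β m) := by
    intro z hz
    induction hz using Subgroup.closure_induction with
    | mem g hg =>
      intro x
      constructor
      · intro hx
        have := hstep x hx g⁻¹ (hsym g hg)
        rw [inv_inv] at this
        rw [this, hx]
      · intro hx
        have := hstep (x * g) hx g hg
        rw [mul_inv_cancel_right] at this
        rw [this]; exact hx
    | one => intro x; simp
    | mul z₁ z₂ hz₁ hz₂ ih₁ ih₂ =>
      intro x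
      rw [ih₁ x, ← mul_assoc] at *
      exact ih₂ (x * z₁)
    | inv z hz ih =>
      intro x
      have := ih (x * z⁻¹)
      rw [inv_mul_cancel_right] at this
      exact this.symm
  -- hence β is constant
  have hconst : ∀ x : G, β x = β m := by
    intro x
    have hmem : m⁻¹ * x ∈ Subgroup.closure (S : Set G) := by
      rw [hgen]; trivial
    have := (hprop _ hmem m).mp rfl
    rwa [mul_inv_cancel_left] at this
  -- conclude β m = 0, contradiction
  have hm0 : β m = 0 := by
    by_cases hG : Finite G
    · haveI := Fintype.ofFinite G
      have hsum0 : ∑ x : G, β x = 0 := by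
        have : ∑ x : G, α (x * y⁻¹) = ∑ x : G, α x :=
          Fintype.sum_equiv (Equiv.mulRight y⁻¹) _ _ fun x => rfl
        simp [hβ, Finset.sum_sub_distrib, this]
      have : (Fintype.card G : ℂ) * β m = 0 := by
        rw [← hsum0]
        simp [hconst, Finset.sum_const, Finset.card_univ, nsmul_eq_mul]
      rcases mul_eq_zero.mp this with h | h
      · exact absurd h (by exact_mod_cast Fintype.card_ne_zero)
      · exact h
    · haveI : Infinite G := not_finite_iff_infinite.mp hG
      have htend := hlp.tendsto_cofinite_zero
      have hconst' : (fun x : G => ‖β x‖ ^ p) = fun _ => ‖β m‖ ^ p := by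
        funext x; rw [hconst x]
      rw [hconst'] at htend
      have : ‖β m‖ ^ p = 0 :=
        tendsto_nhds_unique tendsto_const_nhds htend
      have : ‖β m‖ = 0 := by
        by_contra h
        exact absurd this (by positivity)
      exact norm_eq_zero.mp this
  exact hx₀ (by rw [hconst x₀, hm0])
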